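/- Let H be a totally balanced graph with h vertices and m edges, so m = a(H)(h−1). Let D_1 ⊆ D_2 ⊆ ... be built as unions of copies H_1,...,H_t of H, where D_i = H_1 ∪ ... ∪ H_i, and suppose for each i ≥ 2 the copy H_i shares at least one vertex with D_{i−1}. Let h_1 = h and h_i = |V(H_i) \ V(D_{i−1})| for i ≥ 2. Then |E(D_t)| ≥ a(H)(|V(D_t)| − 1), where |V(D_t)| = Σ h_i. -/

import Mathlib

open scoped Classical

/-- The edges of `G` with both endpoints in `s`. -/
noncomputable def edgesIn {V : Type} [Fintype V] (G : SimpleGraph V) (s : Finset V) :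
    Finset (Sym2 V) :=
  G.edgeFinset.filter (fun e => ∀ v ∈ e, v ∈ s)

/-- Fractional arboricity. -/
noncomputable def fracArb {V : Type} [Fintype V] (G : SimpleGraph V) : ℝ :=
  sSup {x : ℝ | ∃ s : Finset V, 2 ≤ s.card ∧
    x = ((edgesIn G s).card : ℝ) / ((s.card : ℝ) - 1)}

/-- `H` is totally balanced if its fractional arboricity equals
`|E(H)|/(|V(H)|-1)`. -/
def TotallyBalanced {V : Type} [Fintype V] (G : SimpleGraph V) : Prop :=
  fracArb G = (G.edgeFinset.card : ℝ) / ((Fintype.card V : ℝ) - 1)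

lemma edgesIn_card_le {W : Type} [Fintype W] (H : SimpleGraph W) (T : Finset W)
    (hT : T.Nonempty) :
    ((edgesIn H T).card : ℝ) ≤ fracArb H * ((T.card : ℝ) - 1) := by
  rcases lt_or_ge T.card 2 with h2 | h2
  · have hc : T.card = 1 := le_antisymm (by omega) hT.card_pos
    obtain ⟨v, hv⟩ := Finset.card_eq_one.mp hc
    have hemp : edgesIn H T = ∅ := by
      ext e
      simp only [edgesIn, Finset.mem_filter, Finset.notMem_empty, iff_false, not_and]
      intro he hmem
      induction e using Sym2.ind with
      | _ x y =>
        have hadj : H.Adj x y := by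
          rw [SimpleGraph.mem_edgeFinset, SimpleGraph.mem_edgeSet] at he; exact he
        have hx := hmem x (by simp)
        have hy := hmem y (by simp)
        rw [hv, Finset.mem_singleton] at hx hy
        exact H.ne_of_adj hadj (hx.trans hy.symm)
    rw [hemp, hc]
    norm_num
  · have hmem : ((edgesIn H T).card : ℝ) / ((T.card : ℝ) - 1) ∈
        {x : ℝ | ∃ s : Finset W, 2 ≤ s.card ∧
          x = ((edgesIn H s).card : ℝ) / ((s.card : ℝ) - 1)} := ⟨T, h2, rfl⟩
    have hbdd : BddAbove {x : ℝ | ∃ s : Finset W, 2 ≤ s.card ∧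
        x = ((edgesIn H s).card : ℝ) / ((s.card : ℝ) - 1)} := by
      apply Set.Finite.bddAbove
      apply Set.Finite.subset (Set.finite_range
        (fun s : Finset W => ((edgesIn H s).card : ℝ) / ((s.card : ℝ) - 1)))
      rintro x ⟨s, _, rfl⟩
      exact ⟨s, rfl⟩
    have hle : ((edgesIn H T).card : ℝ) / ((T.card : ℝ) - 1) ≤ fracArb H :=
      le_csSup hbdd hmem
    have hpos : (0 : ℝ) < (T.card : ℝ) - 1 := by
      have : (2 : ℝ) ≤ (T.card : ℝ) := by exact_mod_cast h2
      linarith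
    have := (div_le_iff₀ hpos).mp hle
    linarith

theorem stmt16 {W V : Type} [Fintype W] [Fintype V] [DecidableEq V]
    (H : SimpleGraph W) (G : SimpleGraph V)
    (hW : 2 ≤ Fintype.card W) (hbal : TotallyBalanced H)
    (t : ℕ) (ht : 1 ≤ t) (f : Fin t → H ↪g G)
    -- each copy `H_i` (for `i ≥ 2`, i.e. `i.val ≥ 1`) shares a vertex with the
    -- union `D_{i-1}` of the previous copies
    (hconn : ∀ i : Fin t, 1 ≤ i.val →
      ((Finset.univ.image (f i)) ∩
        (Finset.univ.filter (· < i)).biUnion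
          (fun j => Finset.univ.image (f j))).Nonempty) :
    ((((Finset.univ : Finset (Fin t)).biUnion
        (fun i => H.edgeFinset.image (Sym2.map (f i)))).card : ℝ)) ≥
      fracArb H *
        ((((Finset.univ : Finset (Fin t)).biUnion
          (fun i => Finset.univ.image (f i))).card : ℝ) - 1) := by
  set a : ℝ := fracArb H with ha
  have hW1 : ((Fintype.card W : ℝ) - 1) ≠ 0 := by
    have : (2 : ℝ) ≤ (Fintype.card W : ℝ) := by exact_mod_cast hW
    linarith
  have hm : (H.edgeFinset.card : ℝ) = a * ((Fintype.card W : ℝ) - 1) := by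
    rw [ha, hbal, div_mul_cancel₀ _ hW1]
  -- vertex and edge sets of the first n copies
  set Dv : ℕ → Finset V := fun n =>
    (Finset.univ.filter (fun i : Fin t => i.val < n)).biUnion
      (fun i => Finset.univ.image (f i)) with hDv
  set De : ℕ → Finset (Sym2 V) := fun n =>
    (Finset.univ.filter (fun i : Fin t => i.val < n)).biUnion
      (fun i => H.edgeFinset.image (Sym2.map (f i))) with hDe
  have key : ∀ n : ℕ, 1 ≤ n → n ≤ t →
      ((De n).card : ℝ) ≥ a * (((Dv n).card : ℝ) - 1) := by
    intro n
    induction n with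
    | zero => intro h; omega
    | succ n ih =>
      intro _ hnt
      rcases Nat.eq_zero_or_pos n with hn0 | hn1
      · -- base case: one copy
        subst hn0
        have h01 : Finset.univ.filter (fun i : Fin t => i.val < 1)
            = {(⟨0, ht⟩ : Fin t)} := by
          ext i
          simp [Fin.ext_iff]
        have hDe1 : De 1 = H.edgeFinset.image (Sym2.map (f ⟨0, ht⟩)) := by
          rw [hDe]; simp only [h01, Finset.singleton_biUnion]
        have hDv1 : Dv 1 = Finset.univ.image (f ⟨0, ht⟩) := by
          rw [hDv]; simp only [h01, Finset.singleton_biUnion]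
        have hce : (De 1).card = H.edgeFinset.card := by
          rw [hDe1]
          exact Finset.card_image_of_injective _
            (Sym2.map.injective (f ⟨0, ht⟩).injective)
        have hcv : (Dv 1).card = Fintype.card W := by
          rw [hDv1, Finset.card_image_of_injective _ (f ⟨0, ht⟩).injective,
            Finset.card_univ]
        rw [hce, hcv, hm]
      · -- inductive step
        have ihn := ih hn1 (by omega)
        set k : Fin t := ⟨n, by omega⟩ with hk
        set S : Finset V := Dv n with hS
        set E : Finset (Sym2 V) := De n with hE
        set Vk : Finset V := Finset.univ.image (f k) with hVk
        set Ek : Finset (Sym2 V) := H.edgeFinset.image (Sym2.map (f k)) with hEk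
        set T : Finset W := Finset.univ.filter (fun w => f k w ∈ S) with hT
        have hfilt : Finset.univ.filter (fun i : Fin t => i.val < n + 1)
            = insert k (Finset.univ.filter (fun i : Fin t => i.val < n)) := by
          ext i
          simp [hk, Fin.ext_iff]
          omega
        have hDe' : De (n + 1) = Ek ∪ E := by
          rw [hDe]; simp only [hfilt, Finset.biUnion_insert]; rfl
        have hDv' : Dv (n + 1) = Vk ∪ S := by
          rw [hDv]; simp only [hfilt, Finset.biUnion_insert]; rfl
        -- T is nonempty
        have hTne : T.Nonempty := by
          obtain ⟨v, hv⟩ := hconn k (by simp [hk]; omega)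
          rw [Finset.mem_inter] at hv
          obtain ⟨hv1, hv2⟩ := hv
          obtain ⟨w, _, rfl⟩ := Finset.mem_image.mp hv1
          refine ⟨w, ?_⟩
          rw [hT, Finset.mem_filter]
          refine ⟨Finset.mem_univ _, ?_⟩
          rw [hS, hDv]
          convert hv2 using 2
          ext i; simp [hk, Fin.lt_iff_val_lt_val]
        -- old edges of the new copy lie over T
        have hsub : Ek ∩ E ⊆ (edgesIn H T).image (Sym2.map (f k)) := by
          intro e he
          rw [Finset.mem_inter] at he
          obtain ⟨heEk, heE⟩ := he
          rw [hEk] at heEk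
          obtain ⟨e', he', rfl⟩ := Finset.mem_image.mp heEk
          refine Finset.mem_image.mpr ⟨e', ?_, rfl⟩
          rw [edgesIn, Finset.mem_filter]
          refine ⟨he', fun w hw => ?_⟩
          rw [hT, Finset.mem_filter]
          refine ⟨Finset.mem_univ w, ?_⟩
          have hv : f k w ∈ Sym2.map (f k) e' := Sym2.mem_map.mpr ⟨w, hw, rfl⟩
          rw [hE, hDe] at heE
          obtain ⟨j, hj, hje⟩ := Finset.mem_biUnion.mp heE
          obtain ⟨e'', _, heq⟩ := Finset.mem_image.mp hje
          rw [← heq] at hv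
          obtain ⟨w', _, hww'⟩ := Sym2.mem_map.mp hv
          rw [hS, hDv]
          refine Finset.mem_biUnion.mpr ⟨j, hj, ?_⟩
          rw [← hww']
          exact Finset.mem_image_of_mem _ (Finset.mem_univ w')
        -- cardinality facts
        have hEkcard : Ek.card = H.edgeFinset.card := by
          rw [hEk]
          exact Finset.card_image_of_injective _
            (Sym2.map.injective (f k).injective)
        have hEunion : (De (n + 1)).card + (Ek ∩ E).card = Ek.card + E.card := by
          rw [hDe']
          exact Finset.card_union_add_card_inter _ _
        have hVinter : Vk ∩ S = T.image (f k) := by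
          ext v
          simp only [Finset.mem_inter, hVk, Finset.mem_image, hT, Finset.mem_filter,
            Finset.mem_univ, true_and]
          constructor
          · rintro ⟨⟨w, rfl⟩, hvS⟩; exact ⟨w, hvS, rfl⟩
          · rintro ⟨w, hvS, rfl⟩; exact ⟨⟨w, rfl⟩, hvS⟩
        have hVintercard : (Vk ∩ S).card = T.card := by
          rw [hVinter]
          exact Finset.card_image_of_injective _ (f k).injective
        have hVunion : (Dv (n + 1)).card + T.card = Fintype.card W + S.card := by
          rw [hDv', ← hVintercard, ← Finset.card_univ,
            ← Finset.card_image_of_injective Finset.univ (f k).injective]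
          exact Finset.card_union_add_card_inter _ _
        have hI : (Ek ∩ E).card ≤ (edgesIn H T).card :=
          le_trans (Finset.card_le_card hsub) (Finset.card_image_le)
        have hA : ((edgesIn H T).card : ℝ) ≤ a * ((T.card : ℝ) - 1) :=
          edgesIn_card_le H T hTne
        -- put everything together in ℝ
        have hEunion' : ((De (n + 1)).card : ℝ) + ((Ek ∩ E).card : ℝ)
            = (Ek.card : ℝ) + (E.card : ℝ) := by exact_mod_cast hEunion
        have hVunion' : ((Dv (n + 1)).card : ℝ) + (T.card : ℝ)
            = (Fintype.card W : ℝ) + (S.card : ℝ) := by exact_mod_cast hVunion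
        have hI' : ((Ek ∩ E).card : ℝ) ≤ ((edgesIn H T).card : ℝ) := by
          exact_mod_cast hI
        have hEkcard' : (Ek.card : ℝ) = (H.edgeFinset.card : ℝ) := by
          exact_mod_cast hEkcard
        have hring : a * (((Dv (n + 1)).card : ℝ) - 1)
            = a * ((S.card : ℝ) - 1) + a * ((Fintype.card W : ℝ) - 1)
              - a * ((T.card : ℝ) - 1)
              + a * (((Dv (n + 1)).card : ℝ) + (T.card : ℝ)
                - (Fintype.card W : ℝ) - (S.card : ℝ)) := by ring
        have hz : a * (((Dv (n + 1)).card : ℝ) + (T.card : ℝ)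
            - (Fintype.card W : ℝ) - (S.card : ℝ)) = 0 := by
          rw [show ((Dv (n + 1)).card : ℝ) + (T.card : ℝ)
            - (Fintype.card W : ℝ) - (S.card : ℝ) = 0 by linarith]
          ring
        rw [ge_iff_le, hring, hz]
        have hEge : ((E.card : ℝ)) ≥ a * ((S.card : ℝ) - 1) := ihn
        linarith [hm, hA, hI', hEunion', hEkcard', hEge]
  have hfin : Finset.univ.filter (fun i : Fin t => i.val < t)
      = (Finset.univ : Finset (Fin t)) :=
    Finset.filter_true_of_mem (fun i _ => i.isLt)
  have := key t ht le_rfl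
  simp only [hDe, hDv, hfin] at this
  exact this
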